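/- arXiv:2206.13605 — 2 statements merged into one kernel-verified Lean document; each statement's English description precedes it below -/
import Mathlib

section
/- Let P, Q, S be points on the unit sphere S^d ⊂ R^{d+1} with P + Q ≠ 0. Then R_{P+Q}S = P + Q − S − 2[(S − P)·(S − Q)] I(P + Q), where I(x) := |x|^{-2} x is the inversion in the unit sphere and R_{P+Q} is the reflection with respect to the line spanned by P+Q. -/
open scoped RealInnerProductSpace
noncomputable section

/- Euclidean space `ℝ^{d+1}`. -/
abbrev E (d : ℕ) := EuclideanSpace ℝ (Fin (d + 1))

/- Reflection with respect to the line spanned by `Q` (with `sphRefl 0 = -id`). -/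
open Classical in
def sphRefl {d : ℕ} (Q P : E d) : E d :=
  if Q = 0 then -P else (2 * ⟪Q, P⟫ / ‖Q‖ ^ 2) • Q - P

/- Inversion in the unit sphere: `I(x) = |x|⁻² x`. -/
def isph {d : ℕ} (x : E d) : E d := (‖x‖ ^ 2)⁻¹ • x

theorem refl_formula {d : ℕ} (P Q S : E d)
    (hP : ‖P‖ = 1) (hQ : ‖Q‖ = 1) (hS : ‖S‖ = 1) (hPQ : P + Q ≠ 0) :
    sphRefl (P + Q) S = P + Q - S - (2 * ⟪S - P, S - Q⟫) • isph (P + Q) := by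
  have hn : ‖P + Q‖ ^ 2 ≠ 0 := pow_ne_zero _ (norm_ne_zero_iff.mpr hPQ)
  rw [sphRefl, if_neg hPQ, isph, smul_smul]
  have key : 2 * ⟪P + Q, S⟫ / ‖P + Q‖ ^ 2
      = 1 - 2 * ⟪S - P, S - Q⟫ * (‖P + Q‖ ^ 2)⁻¹ := by
    have hpq : ‖P + Q‖ ^ 2 = 2 + 2 * ⟪P, Q⟫ := by
      rw [← real_inner_self_eq_norm_sq, inner_add_add_self,
        real_inner_self_eq_norm_sq, real_inner_self_eq_norm_sq, hP, hQ,
        real_inner_comm Q P]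
      ring
    have hss : ⟪S, S⟫ = 1 := by
      rw [real_inner_self_eq_norm_sq, hS]; norm_num
    rw [div_eq_iff hn]
    simp only [inner_sub_left, inner_sub_right, inner_add_left, hss]
    rw [real_inner_comm Q S, hpq, sub_mul, one_mul, mul_assoc,
      inv_mul_cancel₀ (hpq ▸ hn), mul_one]
    ring
  rw [key]
  module
end
end

section
/- Let u_0, v_0 > 0 and f ∈ L^1([0,u_0] × [0,v_0]; R^{d+1}). Define φ(u,v) := ∫_0^u ∫_0^v f(w,z) dz dw. Then there is a Lebesgue-null set A ⊂ [0,u_0] such that for all u ∈ [0,u_0] \ A and all v ∈ [0,v_0], the partial derivative ∂_u φ(u,v) exists and equals ∫_0^v f(u,z) dz; moreover, the convergence of the difference quotients is uniform in v for each such u. -/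
open scoped RealInnerProductSpace
noncomputable section

set_option maxHeartbeats 1000000 in
open MeasureTheory in
/-- Almost everywhere existence of the partial derivative `∂_u φ`, uniformly in `v`,
for `φ(u,v) = ∫_0^u ∫_0^v f`. -/
theorem exists_partial_derivative {d : ℕ} (u0 v0 : ℝ) (hu0 : 0 < u0) (hv0 : 0 < v0)
    (f : ℝ → ℝ → E d)
    (hf : IntegrableOn (fun p : ℝ × ℝ => f p.1 p.2) (Set.Icc 0 u0 ×ˢ Set.Icc 0 v0))
    (φ : ℝ → ℝ → E d)
    (hφ : ∀ u v, φ u v = ∫ w in (0 : ℝ)..u, ∫ z in (0 : ℝ)..v, f w z) :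
    ∃ A : Set ℝ, A ⊆ Set.Icc 0 u0 ∧ volume A = 0 ∧
      ∀ u ∈ Set.Icc (0 : ℝ) u0 \ A, ∀ ε > (0 : ℝ), ∃ δ > (0 : ℝ),
        ∀ h : ℝ, h ≠ 0 → |h| < δ → u + h ∈ Set.Icc (0 : ℝ) u0 →
          ∀ v ∈ Set.Icc (0 : ℝ) v0,
            ‖h⁻¹ • (φ (u + h) v - φ u v) - ∫ z in (0 : ℝ)..v, f u z‖ ≤ ε := by
  classical
  haveI : Fact ((1:ENNReal) ≤ 1) := ⟨le_rfl⟩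
  haveI : Fact ((1:ENNReal) ≠ ⊤) := ⟨ENNReal.one_ne_top⟩
  set μ : Measure ℝ := volume.restrict (Set.Icc 0 v0) with hμdef
  have hSm : MeasurableSet (Set.Icc (0:ℝ) u0 ×ˢ Set.Icc (0:ℝ) v0) :=
    measurableSet_Icc.prod measurableSet_Icc
  set F : ℝ × ℝ → E d := (Set.Icc (0:ℝ) u0 ×ˢ Set.Icc (0:ℝ) v0).indicator
    (fun p => f p.1 p.2) with hFdef
  have hFvol : Integrable F (volume : Measure (ℝ × ℝ)) := by
    rw [hFdef, integrable_indicator_iff hSm]; exact hf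
  have hFprod : Integrable F ((volume : Measure ℝ).prod μ) := by
    have h1 : (volume : Measure ℝ).prod μ
        = ((volume : Measure ℝ).prod (volume : Measure ℝ)).restrict
          (Set.univ ×ˢ Set.Icc 0 v0) := by
      rw [← Measure.prod_restrict, Measure.restrict_univ]
    rw [h1, ← MeasureTheory.Measure.volume_eq_prod]
    exact hFvol.integrableOn
  have hslice : ∀ᵐ w : ℝ, Integrable (fun z => F (w, z)) μ := hFprod.prod_right_ae
  have hBint : Integrable (fun w => ∫ z, ‖F (w, z)‖ ∂μ) volume :=
    hFprod.integral_norm_prod_left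
  obtain ⟨g, hg⟩ : ∃ g : ℕ → Lp (E d) 1 μ, DenseRange g :=
    TopologicalSpace.exists_dense_seq _
  have hgint : ∀ n, Integrable (g n) μ := fun n => L1.integrable_coeFn (g n)
  set ρ : ℕ → ℝ → ℝ := fun n w => ∫ z, ‖F (w, z) - g n z‖ ∂μ with hρdef
  set σ : ℕ → ℝ → ℝ := fun n => (Set.Icc 0 u0).indicator (ρ n) with hσdef
  have hρmeas : ∀ n, AEStronglyMeasurable (ρ n) volume := fun n =>
    ((hFprod.aestronglyMeasurable.sub
      ((Lp.aestronglyMeasurable (g n)).comp_snd)).norm).integral_prod_right'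
  have hρnonneg : ∀ n w, 0 ≤ ρ n w := fun n w => integral_nonneg fun z => norm_nonneg _
  have hσint : ∀ n, Integrable (σ n) volume := by
    intro n
    have hbig : Integrable ((Set.Icc (0:ℝ) u0).indicator
        (fun w => (∫ z, ‖F (w, z)‖ ∂μ) + ∫ z, ‖g n z‖ ∂μ)) volume := by
      rw [integrable_indicator_iff measurableSet_Icc]
      exact hBint.integrableOn.add
        ((integrableOn_const_iff).mpr (Or.inr (by rw [Real.volume_Icc]; exact ENNReal.ofReal_lt_top)))
    refine hbig.mono' ((hρmeas n).indicator measurableSet_Icc) ?_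
    filter_upwards [hslice] with w hw
    by_cases hmem : w ∈ Set.Icc (0:ℝ) u0
    · rw [hσdef]
      simp only [Set.indicator_of_mem hmem]
      rw [Real.norm_eq_abs, abs_of_nonneg (hρnonneg n w)]
      calc ρ n w ≤ ∫ z, (‖F (w, z)‖ + ‖g n z‖) ∂μ := by
            refine integral_mono ((hw.sub (hgint n)).norm) (hw.norm.add (hgint n).norm) ?_
            exact fun z => norm_sub_le _ _
        _ = (∫ z, ‖F (w, z)‖ ∂μ) + ∫ z, ‖g n z‖ ∂μ := integral_add hw.norm (hgint n).norm
    · rw [hσdef]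
      simp [Set.indicator_of_notMem hmem]
  have hLeb : ∀ᵐ u : ℝ, ∀ n, Filter.Tendsto
      (fun r => ⨍ y in Metric.closedBall u r, ‖σ n y - σ n u‖)
      (nhdsWithin 0 (Set.Ioi 0)) (nhds 0) := by
    rw [ae_all_iff]
    intro n
    filter_upwards [IsUnifLocDoublingMeasure.ae_tendsto_average_norm_sub (volume : Measure ℝ)
      ((hσint n).locallyIntegrable) 1] with u hu
    refine hu (fun _ => u) id Filter.tendsto_id ?_
    filter_upwards [self_mem_nhdsWithin] with r hr
    simp only [Metric.mem_closedBall, dist_self, one_mul]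
    exact le_of_lt hr
  set P : ℝ → Prop := fun u => Integrable (fun z => F (u, z)) μ ∧ ∀ n, Filter.Tendsto
      (fun r => ⨍ y in Metric.closedBall u r, ‖σ n y - σ n u‖)
      (nhdsWithin 0 (Set.Ioi 0)) (nhds 0) with hPdef
  have hP : ∀ᵐ u : ℝ, P u := hslice.and hLeb
  refine ⟨Set.Icc 0 u0 ∩ {u | ¬ P u}, Set.inter_subset_left, ?_, ?_⟩
  · exact measure_mono_null Set.inter_subset_right hP
  intro u hu ε hε
  have huIcc : u ∈ Set.Icc (0:ℝ) u0 := hu.1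
  have hPu : P u := by
    by_contra hc
    exact hu.2 (Set.mem_inter huIcc hc)
  obtain ⟨hFu, hLu⟩ := hPu
  -- slices agree with f on Icc
  have hae_z : ∀ w : ℝ, w ∈ Set.Icc (0:ℝ) u0 →
      (fun z => F (w, z)) =ᵐ[μ] fun z => f w z := by
    intro w hw
    rw [hμdef]
    filter_upwards [ae_restrict_mem measurableSet_Icc] with z hz
    rw [hFdef]
    exact Set.indicator_of_mem (Set.mem_prod.mpr ⟨hw, hz⟩) _
  have hfu : Integrable (fun z => f u z) μ := hFu.congr (hae_z u huIcc)
  -- choose a close element of the dense sequence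
  obtain ⟨n, hn⟩ := hg.exists_dist_lt (hfu.toL1 _) (show (0:ℝ) < ε/4 by linarith)
  have hρu : ρ n u < ε / 4 := by
    have h1 : ρ n u = ∫ z, ‖f u z - g n z‖ ∂μ := by
      refine integral_congr_ae ?_
      filter_upwards [hae_z u huIcc] with z hz
      rw [hz]
    have h2 : dist (hfu.toL1 _) (g n) = ∫ z, ‖f u z - g n z‖ ∂μ := by
      rw [dist_eq_norm, L1.norm_eq_integral_norm]
      refine integral_congr_ae ?_
      filter_upwards [Lp.coeFn_sub (hfu.toL1 _) (g n), hfu.coeFn_toL1] with z ha hb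
      rw [ha, Pi.sub_apply, hb]
    rw [h1, ← h2]; exact hn
  -- choose δ from the Lebesgue point property
  have hEv : ∀ᶠ r in nhdsWithin (0:ℝ) (Set.Ioi 0),
      (⨍ y in Metric.closedBall u r, ‖σ n y - σ n u‖) < ε / 8 :=
    Filter.Tendsto.eventually_lt_const (by linarith) (hLu n)
  obtain ⟨δ, hδpos, hδ⟩ := Metric.mem_nhdsWithin_iff.mp hEv
  refine ⟨δ, hδpos, ?_⟩
  intro h hh0 hhδ huh v hv
  -- fix v, rewrite everything in terms of F and μ
  have hv0' : (0:ℝ) ≤ v := hv.1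
  have hsubv : Set.Ioc (0:ℝ) v ⊆ Set.Icc 0 v0 := fun z hz => ⟨le_of_lt hz.1, hz.2.trans hv.2⟩
  have hres : μ.restrict (Set.Ioc 0 v) = volume.restrict (Set.Ioc 0 v) := by
    rw [hμdef, Measure.restrict_restrict measurableSet_Ioc, Set.inter_eq_left.mpr hsubv]
  have hIK : ∀ w ∈ Set.Icc (0:ℝ) u0,
      (∫ z in (0:ℝ)..v, f w z) = ∫ z in Set.Ioc (0:ℝ) v, F (w, z) ∂μ := by
    intro w hw
    have h1 : (∫ z in Set.Ioc (0:ℝ) v, F (w, z) ∂μ) = ∫ z in Set.Ioc (0:ℝ) v, f w z ∂μ := by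
      refine setIntegral_congr_fun measurableSet_Ioc fun z hz => ?_
      rw [hFdef]
      exact Set.indicator_of_mem (Set.mem_prod.mpr ⟨hw, hsubv hz⟩) _
    rw [h1, hres, intervalIntegral.integral_of_le hv0']
  have hKmeas : AEStronglyMeasurable (fun w => ∫ z in Set.Ioc (0:ℝ) v, F (w, z) ∂μ) volume := by
    have h1 : AEStronglyMeasurable ((Set.univ ×ˢ Set.Ioc (0:ℝ) v).indicator F)
        ((volume : Measure ℝ).prod μ) :=
      hFprod.aestronglyMeasurable.indicator (MeasurableSet.univ.prod measurableSet_Ioc)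
    have h2 := h1.integral_prod_right'
    refine h2.congr (Filter.Eventually.of_forall fun w => ?_)
    show (∫ y, (Set.univ ×ˢ Set.Ioc (0:ℝ) v).indicator F (w, y) ∂μ)
      = ∫ z in Set.Ioc (0:ℝ) v, F (w, z) ∂μ
    rw [← integral_indicator measurableSet_Ioc]
    congr 1
    funext z
    by_cases hz : z ∈ Set.Ioc (0:ℝ) v
    · rw [Set.indicator_of_mem hz, Set.indicator_of_mem (Set.mem_prod.mpr ⟨Set.mem_univ _, hz⟩)]
    · rw [Set.indicator_of_notMem hz,
        Set.indicator_of_notMem (fun hc => hz (Set.mem_prod.mp hc).2)]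
  have hKint : Integrable (fun w => ∫ z in Set.Ioc (0:ℝ) v, F (w, z) ∂μ) volume := by
    refine hBint.mono' hKmeas ?_
    filter_upwards [hslice] with w hw
    calc ‖∫ z in Set.Ioc (0:ℝ) v, F (w, z) ∂μ‖ ≤ ∫ z in Set.Ioc (0:ℝ) v, ‖F (w, z)‖ ∂μ :=
          norm_integral_le_integral_norm _
      _ ≤ ∫ z, ‖F (w, z)‖ ∂μ :=
          setIntegral_le_integral hw.norm (Filter.Eventually.of_forall fun z => norm_nonneg _)
  have hIint : IntegrableOn (fun w => ∫ z in (0:ℝ)..v, f w z) (Set.Icc 0 u0) volume := by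
    refine (hKint.integrableOn).congr ?_
    filter_upwards [ae_restrict_mem measurableSet_Icc] with w hw
    exact (hIK w hw).symm
  have hIab : Set.uIoc u (u + h) ⊆ Set.Icc (0:ℝ) u0 := by
    intro w hw
    exact ⟨le_of_lt (lt_of_le_of_lt (le_min huIcc.1 huh.1) hw.1),
      hw.2.trans (max_le huIcc.2 huh.2)⟩
  have hIiv : ∀ t ∈ Set.Icc (0:ℝ) u0,
      IntervalIntegrable (fun w => ∫ z in (0:ℝ)..v, f w z) volume 0 t := by
    intro t ht
    rw [intervalIntegrable_iff]
    refine hIint.mono_set ?_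
    rw [Set.uIoc_of_le ht.1]
    exact fun w hw => ⟨le_of_lt hw.1, hw.2.trans ht.2⟩
  have hIint_uh : IntervalIntegrable (fun w => ∫ z in (0:ℝ)..v, f w z) volume u (u + h) := by
    rw [intervalIntegrable_iff]
    exact hIint.mono_set hIab
  have key : h⁻¹ • (φ (u + h) v - φ u v) - (∫ z in (0:ℝ)..v, f u z)
      = h⁻¹ • ∫ w in u..(u + h),
          ((∫ z in (0:ℝ)..v, f w z) - ∫ z in (0:ℝ)..v, f u z) := by
    rw [hφ, hφ]
    rw [intervalIntegral.integral_sub hIint_uh intervalIntegrable_const,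
      intervalIntegral.integral_const,
      intervalIntegral.integral_interval_sub_left (hIiv _ huh) (hIiv _ huIcc),
      smul_sub, smul_smul, add_sub_cancel_left, inv_mul_cancel₀ hh0, one_smul]
  rw [key, norm_smul, norm_inv, Real.norm_eq_abs]
  have habs : (0:ℝ) < |h| := abs_pos.mpr hh0
  have hfin : volume (Set.uIoc u (u + h)) < ⊤ :=
    lt_of_le_of_lt (measure_mono hIab) (by rw [Real.volume_Icc]; exact ENNReal.ofReal_lt_top)
  have hfinB : volume (Metric.closedBall u |h|) < ⊤ := measure_closedBall_lt_top
  have hptwise : ∀ᵐ w ∂(volume.restrict (Set.uIoc u (u + h))),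
      ‖(∫ z in (0:ℝ)..v, f w z) - ∫ z in (0:ℝ)..v, f u z‖ ≤ ‖σ n w - σ n u‖ + 2 * σ n u := by
    filter_upwards [ae_restrict_of_ae hslice, ae_restrict_mem measurableSet_uIoc] with w hw hwmem
    have hwIcc : w ∈ Set.Icc (0:ℝ) u0 := hIab hwmem
    have e1 : (∫ z in (0:ℝ)..v, f w z) - (∫ z in (0:ℝ)..v, f u z)
        = ∫ z in Set.Ioc (0:ℝ) v, (F (w, z) - F (u, z)) ∂μ := by
      rw [hIK w hwIcc, hIK u huIcc, ← integral_sub hw.integrableOn hFu.integrableOn]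
    have hρw : ‖∫ z in Set.Ioc (0:ℝ) v, (F (w, z) - F (u, z)) ∂μ‖ ≤ ρ n w + ρ n u := by
      calc ‖∫ z in Set.Ioc (0:ℝ) v, (F (w, z) - F (u, z)) ∂μ‖
          ≤ ∫ z in Set.Ioc (0:ℝ) v, ‖F (w, z) - F (u, z)‖ ∂μ := norm_integral_le_integral_norm _
        _ ≤ ∫ z, ‖F (w, z) - F (u, z)‖ ∂μ :=
            setIntegral_le_integral (hw.sub hFu).norm
              (Filter.Eventually.of_forall fun z => norm_nonneg _)
        _ ≤ ∫ z, (‖F (w, z) - g n z‖ + ‖g n z - F (u, z)‖) ∂μ := by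
            refine integral_mono (hw.sub hFu).norm
              (((hw.sub (hgint n)).norm).add (((hgint n).sub hFu).norm)) fun z => ?_
            calc ‖F (w, z) - F (u, z)‖
                = ‖(F (w, z) - g n z) + (g n z - F (u, z))‖ := by rw [sub_add_sub_cancel]
              _ ≤ _ := norm_add_le _ _
        _ = ρ n w + ρ n u := by
            have hi1 : Integrable (fun z => ‖F (w, z) - g n z‖) μ := (hw.sub (hgint n)).norm
            have hi2 : Integrable (fun z => ‖g n z - F (u, z)‖) μ := ((hgint n).sub hFu).norm
            rw [integral_add hi1 hi2]
            congr 1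
            exact integral_congr_ae (Filter.Eventually.of_forall fun z => by simp [norm_sub_rev])
    have hσw : σ n w = ρ n w := Set.indicator_of_mem hwIcc _
    have hσu : σ n u = ρ n u := Set.indicator_of_mem huIcc _
    rw [e1]
    refine le_trans hρw ?_
    rw [hσw, hσu, Real.norm_eq_abs]
    nlinarith [le_abs_self (ρ n w - ρ n u)]
  have hσu : σ n u = ρ n u := Set.indicator_of_mem huIcc _
  have hσnn : 0 ≤ σ n u := by rw [hσu]; exact hρnonneg n u
  have hIuInt : IntegrableOn (fun w => (∫ z in (0:ℝ)..v, f w z) - ∫ z in (0:ℝ)..v, f u z)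
      (Set.uIoc u (u + h)) volume :=
    (hIint.mono_set hIab).sub ((integrableOn_const_iff).mpr (Or.inr hfin))
  have hσInt1 : IntegrableOn (fun w => ‖σ n w - σ n u‖) (Set.uIoc u (u + h)) volume :=
    (((hσint n).integrableOn).sub ((integrableOn_const_iff).mpr (Or.inr hfin))).norm
  have hσInt : IntegrableOn (fun w => ‖σ n w - σ n u‖ + 2 * σ n u)
      (Set.uIoc u (u + h)) volume :=
    hσInt1.add ((integrableOn_const_iff).mpr (Or.inr hfin))
  have c1 : ‖∫ w in u..(u + h), ((∫ z in (0:ℝ)..v, f w z) - ∫ z in (0:ℝ)..v, f u z)‖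
      ≤ ∫ w in Set.uIoc u (u + h),
          ‖(∫ z in (0:ℝ)..v, f w z) - ∫ z in (0:ℝ)..v, f u z‖ :=
    intervalIntegral.norm_integral_le_integral_norm_uIoc
  have c2 : (∫ w in Set.uIoc u (u + h),
        ‖(∫ z in (0:ℝ)..v, f w z) - ∫ z in (0:ℝ)..v, f u z‖)
      ≤ ∫ w in Set.uIoc u (u + h), (‖σ n w - σ n u‖ + 2 * σ n u) :=
    integral_mono_ae hIuInt.norm hσInt hptwise
  have c3 : (∫ w in Set.uIoc u (u + h), (‖σ n w - σ n u‖ + 2 * σ n u))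
      = (∫ w in Set.uIoc u (u + h), ‖σ n w - σ n u‖)
        + (volume (Set.uIoc u (u + h))).toReal * (2 * σ n u) := by
    rw [integral_add hσInt1 ((integrableOn_const_iff).mpr (Or.inr hfin)), setIntegral_const,
      smul_eq_mul, measureReal_def]
  have hballsub : Set.uIoc u (u + h) ⊆ Metric.closedBall u |h| := by
    intro w hw
    rw [Metric.mem_closedBall, Real.dist_eq, abs_le]
    rcases Set.mem_uIoc.mp hw with ⟨h1, h2⟩ | ⟨h1, h2⟩
    · exact ⟨by linarith [abs_nonneg h], by linarith [le_abs_self h]⟩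
    · exact ⟨by linarith [neg_abs_le h], by linarith [abs_nonneg h]⟩
  have c4 : (∫ w in Set.uIoc u (u + h), ‖σ n w - σ n u‖)
      ≤ ∫ w in Metric.closedBall u |h|, ‖σ n w - σ n u‖ :=
    setIntegral_mono_set
      ((((hσint n).integrableOn).sub ((integrableOn_const_iff).mpr (Or.inr hfinB))).norm)
      (Filter.Eventually.of_forall fun w => norm_nonneg _)
      (HasSubset.Subset.eventuallyLE hballsub)
  have hcb : (volume (Metric.closedBall u |h|)).toReal = 2 * |h| := by
    rw [Real.volume_closedBall, ENNReal.toReal_ofReal (by positivity)]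
  have c5 : (∫ w in Metric.closedBall u |h|, ‖σ n w - σ n u‖)
      = (2 * |h|) * ⨍ y in Metric.closedBall u |h|, ‖σ n y - σ n u‖ := by
    rw [setAverage_eq, smul_eq_mul, measureReal_def, ← hcb, ← mul_assoc,
      mul_inv_cancel₀ (by rw [hcb]; positivity), one_mul]
  have havg : (⨍ y in Metric.closedBall u |h|, ‖σ n y - σ n u‖) < ε / 8 := by
    refine hδ ⟨?_, habs⟩
    rw [Metric.mem_ball, Real.dist_eq, sub_zero, abs_abs]
    exact hhδ
  have hvolI : (volume (Set.uIoc u (u + h))).toReal = |h| := by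
    rw [Set.uIoc, Real.volume_Ioc, max_sub_min_eq_abs, ENNReal.toReal_ofReal (abs_nonneg _)]
    congr 1
    exact add_sub_cancel_left u h
  have hB : ‖∫ w in u..(u + h), ((∫ z in (0:ℝ)..v, f w z) - ∫ z in (0:ℝ)..v, f u z)‖
      ≤ (2 * |h|) * (ε / 8) + |h| * (2 * σ n u) := by
    calc ‖∫ w in u..(u + h), ((∫ z in (0:ℝ)..v, f w z) - ∫ z in (0:ℝ)..v, f u z)‖
        ≤ ∫ w in Set.uIoc u (u + h), (‖σ n w - σ n u‖ + 2 * σ n u) := le_trans c1 c2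
      _ = (∫ w in Set.uIoc u (u + h), ‖σ n w - σ n u‖) + |h| * (2 * σ n u) := by
          rw [c3, hvolI]
      _ ≤ (2 * |h|) * (ε / 8) + |h| * (2 * σ n u) := by
          have := le_trans c4 (le_of_eq c5)
          have h2 : (2 * |h|) * (⨍ y in Metric.closedBall u |h|, ‖σ n y - σ n u‖)
              ≤ (2 * |h|) * (ε / 8) :=
            mul_le_mul_of_nonneg_left (le_of_lt havg) (by positivity)
          linarith
  calc |h|⁻¹ * ‖∫ w in u..(u + h), ((∫ z in (0:ℝ)..v, f w z) - ∫ z in (0:ℝ)..v, f u z)‖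
      ≤ |h|⁻¹ * ((2 * |h|) * (ε / 8) + |h| * (2 * σ n u)) :=
        mul_le_mul_of_nonneg_left hB (inv_nonneg.mpr (abs_nonneg h))
    _ = ε / 4 + 2 * σ n u := by field_simp; ring
    _ ≤ ε := by rw [hσu]; linarith
end
end
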